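/- Let H be a Hilbert space with a bilinear form a that is bounded (constant Λ) and coercive (constant λ) on a closed subspace V. Let b be another bounded bilinear form on H, coercive with constant λ on V, and let u ∈ H. Define the two Galerkin projections P_a u, P_b u ∈ V by a(P_a u, v) = a(u, v) and b(P_b u, v) = a(u, v) for all v ∈ V. Suppose |b(w,v) - a(w,v)| ≤ ε‖w‖‖v‖ for all w, v ∈ H. Then ‖P_a u - P_b u‖ ≤ (ε/λ)‖P_a u‖. -/
import Mathlib


theorem stmt_13 {H : Type*} [NormedAddCommGroup H] [InnerProductSpace ℝ H]
    [CompleteSpace H]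
    (a b : H →ₗ[ℝ] H →ₗ[ℝ] ℝ) (lam Lam ε : ℝ) (hlam : 0 < lam) (hLam : 0 < Lam)
    (hε : 0 ≤ ε)
    (habdd : ∀ u v : H, |a u v| ≤ Lam * ‖u‖ * ‖v‖)
    (hbbdd : ∀ u v : H, |b u v| ≤ Lam * ‖u‖ * ‖v‖)
    (V : Submodule ℝ H) (hV : IsClosed (V : Set H))
    (hacoer : ∀ v ∈ V, a v v ≥ lam * ‖v‖^2)
    (hbcoer : ∀ v ∈ V, b v v ≥ lam * ‖v‖^2)
    (u Pa Pb : H) (hPa : Pa ∈ V) (hPb : Pb ∈ V)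
    (hPadef : ∀ v ∈ V, a Pa v = a u v)
    (hPbdef : ∀ v ∈ V, b Pb v = a u v)
    (hclose : ∀ w v : H, |b w v - a w v| ≤ ε * ‖w‖ * ‖v‖) :
    ‖Pa - Pb‖ ≤ (ε / lam) * ‖Pa‖ := by
  set e := Pb - Pa with he
  have heV : e ∈ V := V.sub_mem hPb hPa
  have hbee : b e e = a Pa e - b Pa e := by
    have h1 : b Pb e = a u e := hPbdef e heV
    have h2 : a Pa e = a u e := hPadef e heV
    have : b e e = b Pb e - b Pa e := by
      simp [he, map_sub]; ring
    rw [this, h1, h2]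
  have hcoe : lam * ‖e‖^2 ≤ b e e := hbcoer e heV
  have hub : b e e ≤ ε * ‖Pa‖ * ‖e‖ := by
    rw [hbee]
    calc a Pa e - b Pa e ≤ |b Pa e - a Pa e| := by
          rw [abs_sub_comm]; exact le_abs_self _
      _ ≤ ε * ‖Pa‖ * ‖e‖ := hclose Pa e
  have hkey : lam * ‖e‖^2 ≤ ε * ‖Pa‖ * ‖e‖ := hcoe.trans hub
  have hnorm : ‖Pa - Pb‖ = ‖e‖ := by rw [he, norm_sub_rev]
  rw [hnorm]
  rcases eq_or_lt_of_le (norm_nonneg e) with h0 | h0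
  · rw [← h0]
    positivity
  · rw [div_mul_eq_mul_div, le_div_iff₀ hlam]
    nlinarith [sq_nonneg ‖e‖]
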